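/- There exist a constant C > 0 and an integer N such that for all n ≥ N, | Σ_{ℓ ∈ ℤ, |ℓ| < n/2, ℓ ≡ n (mod 2)} p_1(ℓ / n^{3/4}) − (n^{3/4}/2) ∫_{−∞}^{∞} p_1(t) dt | ≤ C n^{1/12}. -/

import Mathlib

open MeasureTheory

noncomputable def p1 (t : ℝ) : ℝ := Real.exp (-t ^ 4 / 12)

lemma p1_nonneg (t : ℝ) : 0 ≤ p1 t := (Real.exp_pos _).le

lemma p1_le_one (t : ℝ) : p1 t ≤ 1 := by
  rw [p1, ← Real.exp_zero]
  apply Real.exp_le_exp.2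
  nlinarith [sq_nonneg (t ^ 2)]

lemma p1_continuous : Continuous p1 :=
  Real.continuous_exp.comp (((continuous_pow 4).neg).div_const 12)

lemma p1_integrable : Integrable p1 := by
  have hg : Integrable (fun t : ℝ => Real.exp (1/24) * Real.exp (-(1/12) * t ^ 2)) :=
    (integrable_exp_neg_mul_sq (by norm_num)).const_mul _
  refine hg.mono' p1_continuous.aestronglyMeasurable ?_
  filter_upwards with t
  rw [Real.norm_eq_abs, abs_of_nonneg (p1_nonneg t), p1, ← Real.exp_add]
  apply Real.exp_le_exp.2
  nlinarith [sq_nonneg (t ^ 2 - 1/2)]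

lemma p1_anti : AntitoneOn p1 (Set.Ici 0) := by
  intro x hx y _ hxy
  apply Real.exp_le_exp.2
  have : x ^ 4 ≤ y ^ 4 := pow_le_pow_left₀ hx hxy 4
  linarith

lemma p1_mono : MonotoneOn p1 (Set.Iic 0) := by
  intro x _ y hy hxy
  apply Real.exp_le_exp.2
  have h1 : (0:ℝ) ≤ -y := neg_nonneg.2 hy
  have h2 : (-y) ^ 4 ≤ (-x) ^ 4 := pow_le_pow_left₀ h1 (by linarith) 4
  have e1 : (-y : ℝ) ^ 4 = y ^ 4 := by ring
  have e2 : (-x : ℝ) ^ 4 = x ^ 4 := by ring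
  rw [e1, e2] at h2
  linarith

lemma p1_le_exp (t : ℝ) : p1 t ≤ Real.exp 2 * Real.exp (-|t|) := by
  rw [p1, ← Real.exp_add]
  apply Real.exp_le_exp.2
  have h1 : |t| ^ 4 = t ^ 4 := by
    rw [pow_abs, abs_of_nonneg (by nlinarith [sq_nonneg (t ^ 2)] : (0:ℝ) ≤ t ^ 4)]
  nlinarith [sq_nonneg (|t| ^ 2 - 2), sq_nonneg (|t| - 3/2)]

lemma p1_tail_Ici {T : ℝ} (hT : 0 ≤ T) :
    ∫ x in Set.Ici T, p1 x ≤ Real.exp 2 * Real.exp (-T) := by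
  have hgi : IntegrableOn (fun x : ℝ => Real.exp 2 * Real.exp (-x)) (Set.Ici T) := by
    rw [integrableOn_Ici_iff_integrableOn_Ioi]
    have h := (exp_neg_integrableOn_Ioi T (b := 1) one_pos).const_mul (Real.exp 2)
    simpa [IntegrableOn] using h
  calc ∫ x in Set.Ici T, p1 x ≤ ∫ x in Set.Ici T, Real.exp 2 * Real.exp (-x) := by
        apply setIntegral_mono_on p1_integrable.integrableOn hgi measurableSet_Ici
        intro x hx
        have hax : |x| = x := abs_of_nonneg (le_trans hT hx)
        calc p1 x ≤ Real.exp 2 * Real.exp (-|x|) := p1_le_exp x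
          _ = Real.exp 2 * Real.exp (-x) := by rw [hax]
    _ = Real.exp 2 * Real.exp (-T) := by
        rw [integral_Ici_eq_integral_Ioi, integral_const_mul, integral_exp_neg_Ioi]

lemma p1_tail_Iic {T : ℝ} (hT : 0 ≤ T) :
    ∫ x in Set.Iic (-T), p1 x ≤ Real.exp 2 * Real.exp (-T) := by
  have hgi : IntegrableOn (fun x : ℝ => Real.exp 2 * Real.exp x) (Set.Iic (-T)) :=
    (integrableOn_exp_Iic (-T)).const_mul _
  calc ∫ x in Set.Iic (-T), p1 x ≤ ∫ x in Set.Iic (-T), Real.exp 2 * Real.exp x := by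
        apply setIntegral_mono_on p1_integrable.integrableOn hgi measurableSet_Iic
        intro x hx
        have hx0 : x ≤ 0 := le_trans hx (by linarith)
        have hax : |x| = -x := abs_of_nonpos hx0
        calc p1 x ≤ Real.exp 2 * Real.exp (-|x|) := p1_le_exp x
          _ = Real.exp 2 * Real.exp x := by rw [hax, neg_neg]
    _ = Real.exp 2 * Real.exp (-T) := by
        rw [integral_const_mul, integral_exp_Iic]

noncomputable def Aset (n : ℕ) : Finset ℤ :=
  (Finset.Ioo (-(n : ℤ)) (n : ℤ)).filter
    (fun ℓ : ℤ => 2 * |ℓ| < (n : ℤ) ∧ ℓ % 2 = (n : ℤ) % 2)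

lemma mem_Aset {n : ℕ} {ℓ : ℤ} (hn : 1 ≤ n) :
    ℓ ∈ Aset n ↔ 2 * |ℓ| < (n : ℤ) ∧ ℓ % 2 = (n : ℤ) % 2 := by
  simp only [Aset, Finset.mem_filter, Finset.mem_Ioo]
  constructor
  · rintro ⟨_, h⟩; exact h
  · rintro ⟨h1, h2⟩
    have ha := abs_nonneg ℓ
    have hb := le_abs_self ℓ
    have hc := neg_abs_le ℓ
    exact ⟨⟨by linarith, by linarith⟩, h1, h2⟩

lemma sum_upper (n : ℕ) (hn : 16 ≤ n) :
    (∑ ℓ ∈ Aset n, p1 ((ℓ : ℝ) / (n : ℝ) ^ ((3 : ℝ) / 4))) ≤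
      ((n : ℝ) ^ ((3 : ℝ) / 4) / 2) * (∫ t : ℝ, p1 t) + 3 := by
  classical
  have hn1 : 1 ≤ n := by omega
  have hn0 : (0:ℝ) < n := by positivity
  set c : ℝ := (n : ℝ) ^ ((3 : ℝ) / 4) with hcdef
  have hc : 0 < c := Real.rpow_pos_of_pos hn0 _
  set U : ℤ → Set ℝ := fun ℓ =>
    if 0 ≤ ℓ then Set.Ioc (((ℓ:ℝ) - 2)/c) ((ℓ:ℝ)/c)
    else Set.Ico ((ℓ:ℝ)/c) (((ℓ:ℝ) + 2)/c) with hU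
  set B : Finset ℤ := (Aset n).filter (fun ℓ => 2 ≤ |ℓ|) with hB
  set Sm : Finset ℤ := (Aset n).filter (fun ℓ => ¬ 2 ≤ |ℓ|) with hSm
  have hsplit : (∑ ℓ ∈ Aset n, p1 ((ℓ:ℝ)/c)) =
      (∑ ℓ ∈ B, p1 ((ℓ:ℝ)/c)) + ∑ ℓ ∈ Sm, p1 ((ℓ:ℝ)/c) :=
    (Finset.sum_filter_add_sum_filter_not _ _ _).symm
  -- small part
  have hSmle : (∑ ℓ ∈ Sm, p1 ((ℓ:ℝ)/c)) ≤ 3 := by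
    have hsub : Sm ⊆ ({-1, 0, 1} : Finset ℤ) := by
      intro ℓ hℓ
      have h := (Finset.mem_filter.mp hℓ).2
      rw [not_le] at h
      have h2 := abs_le.mp (by omega : |ℓ| ≤ 1)
      simp only [Finset.mem_insert, Finset.mem_singleton]
      omega
    have hcard : Sm.card ≤ 3 := le_trans (Finset.card_le_card hsub) (by decide)
    calc (∑ ℓ ∈ Sm, p1 ((ℓ:ℝ)/c)) ≤ ∑ _ℓ ∈ Sm, (1:ℝ) :=
          Finset.sum_le_sum (fun i _ => p1_le_one _)
      _ = Sm.card := by simp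
      _ ≤ 3 := by exact_mod_cast hcard
  -- facts about members of B
  have hBfact : ∀ ℓ ∈ B, (2 ≤ ℓ ∨ ℓ ≤ -2) ∧ ℓ % 2 = (n:ℤ) % 2 := by
    intro ℓ hℓ
    obtain ⟨hA, h2⟩ := Finset.mem_filter.mp hℓ
    obtain ⟨_, hpar⟩ := (mem_Aset hn1).mp hA
    refine ⟨?_, hpar⟩
    rcases abs_cases ℓ with ⟨e, _⟩ | ⟨e, _⟩ <;> omega
  have hmeasU : ∀ ℓ : ℤ, MeasurableSet (U ℓ) := by
    intro ℓ
    simp only [hU]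
    split_ifs
    · exact measurableSet_Ioc
    · exact measurableSet_Ico
  -- per-term bound
  have hkey : ∀ ℓ ∈ B, p1 ((ℓ:ℝ)/c) ≤ c/2 * ∫ x in U ℓ, p1 x := by
    intro ℓ hℓ
    obtain ⟨hsgn, _⟩ := hBfact ℓ hℓ
    have hmain : 2/c * p1 ((ℓ:ℝ)/c) ≤ ∫ x in U ℓ, p1 x := by
      rcases hsgn with h2 | h2
      · -- ℓ ≥ 2
        have h0 : (0:ℤ) ≤ ℓ := by omega
        have h2' : (2:ℝ) ≤ (ℓ:ℝ) := by exact_mod_cast h2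
        have hUeq : U ℓ = Set.Ioc (((ℓ:ℝ) - 2)/c) ((ℓ:ℝ)/c) := by simp only [hU]; simp [h0]
        have hmono : ∀ x ∈ U ℓ, p1 ((ℓ:ℝ)/c) ≤ p1 x := by
          intro x hx
          rw [hUeq, Set.mem_Ioc] at hx
          have hl0 : (0:ℝ) ≤ ((ℓ:ℝ) - 2)/c := div_nonneg (by linarith) hc.le
          exact p1_anti (Set.mem_Ici.2 (by linarith [hx.1])) (Set.mem_Ici.2 (by positivity)) hx.2
        have hci : IntegrableOn (fun _ : ℝ => p1 ((ℓ:ℝ)/c)) (U ℓ) := by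
          rw [hUeq]
          exact integrableOn_const measure_Ioc_lt_top.ne
        have h1 : ∫ _x in U ℓ, p1 ((ℓ:ℝ)/c) ≤ ∫ x in U ℓ, p1 x :=
          setIntegral_mono_on hci p1_integrable.integrableOn (hmeasU ℓ) hmono
        have he : (ℓ:ℝ)/c - ((ℓ:ℝ) - 2)/c = 2/c := by field_simp; ring
        rw [setIntegral_const, smul_eq_mul] at h1
        rw [hUeq, Real.volume_real_Ioc, he, max_eq_left (by positivity : (0:ℝ) ≤ 2/c)] at h1
        rw [hUeq]; exact h1
      · -- ℓ ≤ -2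
        have h0 : ¬ (0:ℤ) ≤ ℓ := by omega
        have h2' : (ℓ:ℝ) ≤ -2 := by exact_mod_cast h2
        have hUeq : U ℓ = Set.Ico ((ℓ:ℝ)/c) (((ℓ:ℝ) + 2)/c) := by simp only [hU]; simp [h0]
        have hmono : ∀ x ∈ U ℓ, p1 ((ℓ:ℝ)/c) ≤ p1 x := by
          intro x hx
          rw [hUeq, Set.mem_Ico] at hx
          have hl0 : ((ℓ:ℝ) + 2)/c ≤ 0 := div_nonpos_of_nonpos_of_nonneg (by linarith) hc.le
          have hlc : (ℓ:ℝ)/c ≤ 0 := div_nonpos_of_nonpos_of_nonneg (by linarith) hc.le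
          exact p1_mono (Set.mem_Iic.2 hlc) (Set.mem_Iic.2 (by linarith [hx.2])) hx.1
        have hci : IntegrableOn (fun _ : ℝ => p1 ((ℓ:ℝ)/c)) (U ℓ) := by
          rw [hUeq]
          exact integrableOn_const measure_Ico_lt_top.ne
        have h1 : ∫ _x in U ℓ, p1 ((ℓ:ℝ)/c) ≤ ∫ x in U ℓ, p1 x :=
          setIntegral_mono_on hci p1_integrable.integrableOn (hmeasU ℓ) hmono
        have he : ((ℓ:ℝ) + 2)/c - (ℓ:ℝ)/c = 2/c := by field_simp; ring
        rw [setIntegral_const, smul_eq_mul] at h1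
        rw [hUeq, Real.volume_real_Ico, he, max_eq_left (by positivity : (0:ℝ) ≤ 2/c)] at h1
        rw [hUeq]; exact h1
    have h3 := mul_le_mul_of_nonneg_left hmain (by positivity : (0:ℝ) ≤ c/2)
    calc p1 ((ℓ:ℝ)/c) = c/2 * (2/c * p1 ((ℓ:ℝ)/c)) := by field_simp
      _ ≤ c/2 * ∫ x in U ℓ, p1 x := h3
  -- disjointness
  have hdisjU : Set.Pairwise ↑B (Function.onFun Disjoint U) := by
    intro ℓ hℓ ℓ' hℓ' hne
    have hf := hBfact ℓ (Finset.mem_coe.mp hℓ)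
    have hf' := hBfact ℓ' (Finset.mem_coe.mp hℓ')
    have hgap : ℓ + 2 ≤ ℓ' ∨ ℓ' + 2 ≤ ℓ := by omega
    unfold Function.onFun
    rcases le_or_gt 0 ℓ with h0 | h0 <;> rcases le_or_gt 0 ℓ' with h0' | h0'
    · -- both nonneg, both ≥ 2
      have hUeq : U ℓ = Set.Ioc (((ℓ:ℝ) - 2)/c) ((ℓ:ℝ)/c) := by simp only [hU]; simp [h0]
      have hUeq' : U ℓ' = Set.Ioc (((ℓ':ℝ) - 2)/c) ((ℓ':ℝ)/c) := by simp only [hU]; simp [h0']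
      rw [hUeq, hUeq', Set.Ioc_disjoint_Ioc]
      rcases hgap with h | h
      · have hr : (ℓ:ℝ) + 2 ≤ (ℓ':ℝ) := by exact_mod_cast h
        calc min ((ℓ:ℝ)/c) ((ℓ':ℝ)/c) ≤ (ℓ:ℝ)/c := min_le_left _ _
          _ ≤ ((ℓ':ℝ) - 2)/c := by gcongr; linarith
          _ ≤ max (((ℓ:ℝ) - 2)/c) (((ℓ':ℝ) - 2)/c) := le_max_right _ _
      · have hr : (ℓ':ℝ) + 2 ≤ (ℓ:ℝ) := by exact_mod_cast h
        calc min ((ℓ:ℝ)/c) ((ℓ':ℝ)/c) ≤ (ℓ':ℝ)/c := min_le_right _ _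
          _ ≤ ((ℓ:ℝ) - 2)/c := by gcongr; linarith
          _ ≤ max (((ℓ:ℝ) - 2)/c) (((ℓ':ℝ) - 2)/c) := le_max_left _ _
    · -- ℓ ≥ 2, ℓ' ≤ -2
      have h2 : 2 ≤ ℓ := by omega
      have h2' : ℓ' ≤ -2 := by omega
      have hUeq : U ℓ = Set.Ioc (((ℓ:ℝ) - 2)/c) ((ℓ:ℝ)/c) := by simp only [hU]; simp [h0]
      have hUeq' : U ℓ' = Set.Ico ((ℓ':ℝ)/c) (((ℓ':ℝ) + 2)/c) := by
        simp only [hU]; simp [not_le.2 h0']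
      rw [hUeq, hUeq', Set.disjoint_left]
      intro x hx hx'
      have hr : (2:ℝ) ≤ (ℓ:ℝ) := by exact_mod_cast h2
      have hr' : (ℓ':ℝ) + 2 ≤ 0 := by exact_mod_cast (by omega : ℓ' + 2 ≤ 0)
      have e1 : (0:ℝ) ≤ ((ℓ:ℝ) - 2)/c := div_nonneg (by linarith) hc.le
      have e2 : ((ℓ':ℝ) + 2)/c ≤ 0 := div_nonpos_of_nonpos_of_nonneg hr' hc.le
      have := hx.1
      have := hx'.2
      simp only [Set.mem_Ioc, Set.mem_Ico] at hx hx'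
      linarith [hx.1, hx'.2]
    · -- ℓ ≤ -2, ℓ' ≥ 2 : symmetric
      have h2 : ℓ ≤ -2 := by omega
      have h2' : 2 ≤ ℓ' := by omega
      have hUeq : U ℓ = Set.Ico ((ℓ:ℝ)/c) (((ℓ:ℝ) + 2)/c) := by simp only [hU]; simp [not_le.2 h0]
      have hUeq' : U ℓ' = Set.Ioc (((ℓ':ℝ) - 2)/c) ((ℓ':ℝ)/c) := by simp only [hU]; simp [h0']
      rw [hUeq, hUeq', Set.disjoint_left]
      intro x hx hx'
      have hr : (ℓ:ℝ) + 2 ≤ 0 := by exact_mod_cast (by omega : ℓ + 2 ≤ 0)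
      have hr' : (2:ℝ) ≤ (ℓ':ℝ) := by exact_mod_cast h2'
      have e1 : ((ℓ:ℝ) + 2)/c ≤ 0 := div_nonpos_of_nonpos_of_nonneg hr hc.le
      have e2 : (0:ℝ) ≤ ((ℓ':ℝ) - 2)/c := div_nonneg (by linarith) hc.le
      simp only [Set.mem_Ioc, Set.mem_Ico] at hx hx'
      linarith [hx.2, hx'.1]
    · -- both neg
      have hUeq : U ℓ = Set.Ico ((ℓ:ℝ)/c) (((ℓ:ℝ) + 2)/c) := by simp only [hU]; simp [not_le.2 h0]
      have hUeq' : U ℓ' = Set.Ico ((ℓ':ℝ)/c) (((ℓ':ℝ) + 2)/c) := by simp only [hU]; simp [not_le.2 h0']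
      rw [hUeq, hUeq', Set.Ico_disjoint_Ico]
      rcases hgap with h | h
      · have hr : (ℓ:ℝ) + 2 ≤ (ℓ':ℝ) := by exact_mod_cast h
        calc min (((ℓ:ℝ) + 2)/c) (((ℓ':ℝ) + 2)/c) ≤ ((ℓ:ℝ) + 2)/c := min_le_left _ _
          _ ≤ (ℓ':ℝ)/c := by gcongr
          _ ≤ max ((ℓ:ℝ)/c) ((ℓ':ℝ)/c) := le_max_right _ _
      · have hr : (ℓ':ℝ) + 2 ≤ (ℓ:ℝ) := by exact_mod_cast h
        calc min (((ℓ:ℝ) + 2)/c) (((ℓ':ℝ) + 2)/c) ≤ ((ℓ':ℝ) + 2)/c := min_le_right _ _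
          _ ≤ (ℓ:ℝ)/c := by gcongr
          _ ≤ max ((ℓ:ℝ)/c) ((ℓ':ℝ)/c) := le_max_left _ _
  -- combine
  have hBsum : (∑ ℓ ∈ B, p1 ((ℓ:ℝ)/c)) ≤ c/2 * ∫ t : ℝ, p1 t := by
    calc (∑ ℓ ∈ B, p1 ((ℓ:ℝ)/c)) ≤ ∑ ℓ ∈ B, c/2 * ∫ x in U ℓ, p1 x :=
          Finset.sum_le_sum hkey
      _ = c/2 * ∑ ℓ ∈ B, ∫ x in U ℓ, p1 x := (Finset.mul_sum _ _ _).symm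
      _ = c/2 * ∫ x in ⋃ ℓ ∈ B, U ℓ, p1 x := by
          rw [integral_biUnion_finset B (fun ℓ _ => hmeasU ℓ) hdisjU
            (fun ℓ _ => p1_integrable.integrableOn)]
      _ ≤ c/2 * ∫ t : ℝ, p1 t := by
          apply mul_le_mul_of_nonneg_left ?_ (by positivity)
          exact setIntegral_le_integral p1_integrable
            (Filter.Eventually.of_forall p1_nonneg)
  rw [hsplit]
  linarith

lemma sum_lower (n : ℕ) (hn : 16 ≤ n) :
    ((n : ℝ) ^ ((3 : ℝ) / 4) / 2) * (∫ t : ℝ, p1 t) - 2 -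
      (n : ℝ) ^ ((3 : ℝ) / 4) * Real.exp 2 *
        Real.exp (-(((n : ℝ)/2 - 1) / (n : ℝ) ^ ((3 : ℝ) / 4))) ≤
      ∑ ℓ ∈ Aset n, p1 ((ℓ : ℝ) / (n : ℝ) ^ ((3 : ℝ) / 4)) := by
  classical
  have hn1 : 1 ≤ n := by omega
  have hn0 : (0:ℝ) < n := by positivity
  have hn16 : (16:ℝ) ≤ n := by exact_mod_cast hn
  set c : ℝ := (n : ℝ) ^ ((3 : ℝ) / 4) with hcdef
  have hc : 0 < c := Real.rpow_pos_of_pos hn0 _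
  set T : ℝ := ((n : ℝ)/2 - 1) / c with hTdef
  have hT0 : 0 ≤ T := div_nonneg (by linarith) hc.le
  set L : ℤ → Set ℝ := fun ℓ =>
    if 0 ≤ ℓ then Set.Ico ((ℓ:ℝ)/c) (((ℓ:ℝ) + 2)/c)
    else Set.Ioc (((ℓ:ℝ) - 2)/c) ((ℓ:ℝ)/c) with hL
  have hmeasL : ∀ ℓ : ℤ, MeasurableSet (L ℓ) := by
    intro ℓ
    simp only [hL]
    split_ifs
    · exact measurableSet_Ico
    · exact measurableSet_Ioc
  -- per-term bound
  have lkey : ∀ ℓ ∈ Aset n, (∫ x in L ℓ, p1 x) ≤ 2/c * p1 ((ℓ:ℝ)/c) := by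
    intro ℓ hℓ
    by_cases h0 : 0 ≤ ℓ
    · have hLeq : L ℓ = Set.Ico ((ℓ:ℝ)/c) (((ℓ:ℝ) + 2)/c) := by simp only [hL]; simp [h0]
      have h0' : (0:ℝ) ≤ (ℓ:ℝ) := by exact_mod_cast h0
      have hmono : ∀ x ∈ L ℓ, p1 x ≤ p1 ((ℓ:ℝ)/c) := by
        intro x hx
        rw [hLeq, Set.mem_Ico] at hx
        have hl0 : (0:ℝ) ≤ (ℓ:ℝ)/c := by positivity
        exact p1_anti (Set.mem_Ici.2 hl0) (Set.mem_Ici.2 (by linarith [hx.1])) hx.1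
      have hci : IntegrableOn (fun _ : ℝ => p1 ((ℓ:ℝ)/c)) (L ℓ) := by
        rw [hLeq]; exact integrableOn_const measure_Ico_lt_top.ne
      have h1 : (∫ x in L ℓ, p1 x) ≤ ∫ _x in L ℓ, p1 ((ℓ:ℝ)/c) :=
        setIntegral_mono_on p1_integrable.integrableOn hci (hmeasL ℓ) hmono
      have he : ((ℓ:ℝ) + 2)/c - (ℓ:ℝ)/c = 2/c := by field_simp; ring
      rw [setIntegral_const, smul_eq_mul] at h1
      rw [hLeq, Real.volume_real_Ico, he,
        max_eq_left (by positivity : (0:ℝ) ≤ 2/c)] at h1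
      rw [hLeq]; exact h1
    · have hLeq : L ℓ = Set.Ioc (((ℓ:ℝ) - 2)/c) ((ℓ:ℝ)/c) := by simp only [hL]; simp [h0]
      have h0' : (ℓ:ℝ) ≤ 0 := by exact_mod_cast (by omega : ℓ ≤ 0)
      have hmono : ∀ x ∈ L ℓ, p1 x ≤ p1 ((ℓ:ℝ)/c) := by
        intro x hx
        rw [hLeq, Set.mem_Ioc] at hx
        have hl0 : (ℓ:ℝ)/c ≤ 0 := div_nonpos_of_nonpos_of_nonneg h0' hc.le
        exact p1_mono (Set.mem_Iic.2 (by linarith [hx.2])) (Set.mem_Iic.2 hl0) hx.2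
      have hci : IntegrableOn (fun _ : ℝ => p1 ((ℓ:ℝ)/c)) (L ℓ) := by
        rw [hLeq]; exact integrableOn_const measure_Ioc_lt_top.ne
      have h1 : (∫ x in L ℓ, p1 x) ≤ ∫ _x in L ℓ, p1 ((ℓ:ℝ)/c) :=
        setIntegral_mono_on p1_integrable.integrableOn hci (hmeasL ℓ) hmono
      have he : (ℓ:ℝ)/c - ((ℓ:ℝ) - 2)/c = 2/c := by field_simp; ring
      rw [setIntegral_const, smul_eq_mul] at h1
      rw [hLeq, Real.volume_real_Ioc, he,
        max_eq_left (by positivity : (0:ℝ) ≤ 2/c)] at h1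
      rw [hLeq]; exact h1
  -- disjointness
  have ldisj : Set.Pairwise ↑(Aset n) (Function.onFun Disjoint L) := by
    intro ℓ hℓ ℓ' hℓ' hne
    have hp := ((mem_Aset hn1).mp (Finset.mem_coe.mp hℓ)).2
    have hp' := ((mem_Aset hn1).mp (Finset.mem_coe.mp hℓ')).2
    have hgap : ℓ + 2 ≤ ℓ' ∨ ℓ' + 2 ≤ ℓ := by omega
    unfold Function.onFun
    rcases le_or_gt 0 ℓ with h0 | h0 <;> rcases le_or_gt 0 ℓ' with h0' | h0'
    · have hLeq : L ℓ = Set.Ico ((ℓ:ℝ)/c) (((ℓ:ℝ) + 2)/c) := by simp only [hL]; simp [h0]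
      have hLeq' : L ℓ' = Set.Ico ((ℓ':ℝ)/c) (((ℓ':ℝ) + 2)/c) := by simp only [hL]; simp [h0']
      rw [hLeq, hLeq', Set.Ico_disjoint_Ico]
      rcases hgap with h | h
      · have hr : (ℓ:ℝ) + 2 ≤ (ℓ':ℝ) := by exact_mod_cast h
        calc min (((ℓ:ℝ) + 2)/c) (((ℓ':ℝ) + 2)/c) ≤ ((ℓ:ℝ) + 2)/c := min_le_left _ _
          _ ≤ (ℓ':ℝ)/c := by gcongr
          _ ≤ max ((ℓ:ℝ)/c) ((ℓ':ℝ)/c) := le_max_right _ _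
      · have hr : (ℓ':ℝ) + 2 ≤ (ℓ:ℝ) := by exact_mod_cast h
        calc min (((ℓ:ℝ) + 2)/c) (((ℓ':ℝ) + 2)/c) ≤ ((ℓ':ℝ) + 2)/c := min_le_right _ _
          _ ≤ (ℓ:ℝ)/c := by gcongr
          _ ≤ max ((ℓ:ℝ)/c) ((ℓ':ℝ)/c) := le_max_left _ _
    · -- ℓ ≥ 0, ℓ' < 0
      have hLeq : L ℓ = Set.Ico ((ℓ:ℝ)/c) (((ℓ:ℝ) + 2)/c) := by simp only [hL]; simp [h0]
      have hLeq' : L ℓ' = Set.Ioc (((ℓ':ℝ) - 2)/c) ((ℓ':ℝ)/c) := by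
        simp only [hL]; simp [not_le.2 h0']
      rw [hLeq, hLeq', Set.disjoint_left]
      intro x hx hx'
      have hr : (0:ℝ) ≤ (ℓ:ℝ) := by exact_mod_cast h0
      have hr' : (ℓ':ℝ) ≤ -1 := by exact_mod_cast (by omega : ℓ' ≤ -1)
      have e1 : (0:ℝ) ≤ (ℓ:ℝ)/c := by positivity
      have e2 : (ℓ':ℝ)/c ≤ 0 := div_nonpos_of_nonpos_of_nonneg (by linarith) hc.le
      simp only [Set.mem_Ico, Set.mem_Ioc] at hx hx'
      have hne0 : (ℓ':ℝ)/c < 0 := by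
        apply div_neg_of_neg_of_pos (by linarith) hc
      linarith [hx.1, hx'.2]
    · -- ℓ < 0, ℓ' ≥ 0
      have hLeq : L ℓ = Set.Ioc (((ℓ:ℝ) - 2)/c) ((ℓ:ℝ)/c) := by
        simp only [hL]; simp [not_le.2 h0]
      have hLeq' : L ℓ' = Set.Ico ((ℓ':ℝ)/c) (((ℓ':ℝ) + 2)/c) := by simp only [hL]; simp [h0']
      rw [hLeq, hLeq', Set.disjoint_left]
      intro x hx hx'
      have hr : (ℓ:ℝ) ≤ -1 := by exact_mod_cast (by omega : ℓ ≤ -1)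
      have hr' : (0:ℝ) ≤ (ℓ':ℝ) := by exact_mod_cast h0'
      have e1 : (ℓ:ℝ)/c < 0 := div_neg_of_neg_of_pos (by linarith) hc
      have e2 : (0:ℝ) ≤ (ℓ':ℝ)/c := by positivity
      simp only [Set.mem_Ico, Set.mem_Ioc] at hx hx'
      linarith [hx.2, hx'.1]
    · have hLeq : L ℓ = Set.Ioc (((ℓ:ℝ) - 2)/c) ((ℓ:ℝ)/c) := by
        simp only [hL]; simp [not_le.2 h0]
      have hLeq' : L ℓ' = Set.Ioc (((ℓ':ℝ) - 2)/c) ((ℓ':ℝ)/c) := by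
        simp only [hL]; simp [not_le.2 h0']
      rw [hLeq, hLeq', Set.Ioc_disjoint_Ioc]
      rcases hgap with h | h
      · have hr : (ℓ:ℝ) + 2 ≤ (ℓ':ℝ) := by exact_mod_cast h
        calc min ((ℓ:ℝ)/c) ((ℓ':ℝ)/c) ≤ (ℓ:ℝ)/c := min_le_left _ _
          _ ≤ ((ℓ':ℝ) - 2)/c := by gcongr; linarith
          _ ≤ max (((ℓ:ℝ) - 2)/c) (((ℓ':ℝ) - 2)/c) := le_max_right _ _
      · have hr : (ℓ':ℝ) + 2 ≤ (ℓ:ℝ) := by exact_mod_cast h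
        calc min ((ℓ:ℝ)/c) ((ℓ':ℝ)/c) ≤ (ℓ':ℝ)/c := min_le_right _ _
          _ ≤ ((ℓ:ℝ) - 2)/c := by gcongr; linarith
          _ ≤ max (((ℓ:ℝ) - 2)/c) (((ℓ':ℝ) - 2)/c) := le_max_left _ _
  -- the finder
  have hfind : ∀ y : ℝ, 2/c ≤ y → y < T → ∃ ℓ : ℤ, 1 ≤ ℓ ∧ 2*ℓ < (n:ℤ) ∧
      ℓ % 2 = (n:ℤ) % 2 ∧ (ℓ:ℝ)/c ≤ y ∧ y < ((ℓ:ℝ) + 2)/c := by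
    intro y hy1 hy2
    have hyc : (2:ℝ) ≤ y * c := by
      rw [div_le_iff₀ hc] at hy1; linarith
    set m : ℤ := ⌊y * c⌋ with hm
    have hm1 : (m:ℝ) ≤ y * c := Int.floor_le _
    have hm2 : y * c < m + 1 := Int.lt_floor_add_one _
    have hm3 : (2:ℤ) ≤ m := by
      rw [hm]; exact Int.le_floor.2 (by exact_mod_cast hyc)
    have hTc : T * c = (n:ℝ)/2 - 1 := div_mul_cancel₀ _ (ne_of_gt hc)
    have hycT : y * c < (n:ℝ)/2 - 1 := by
      rw [← hTc]; exact mul_lt_mul_of_pos_right hy2 hc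
    have hkey : ∀ ℓ : ℤ, 1 ≤ ℓ → ℓ ≤ m → m - 1 ≤ ℓ → ℓ % 2 = (n:ℤ) % 2 →
        (1 ≤ ℓ ∧ 2*ℓ < (n:ℤ) ∧ ℓ % 2 = (n:ℤ) % 2 ∧ (ℓ:ℝ)/c ≤ y ∧ y < ((ℓ:ℝ) + 2)/c) := by
      intro ℓ h1 h2 h3 h4
      have hr1 : (ℓ:ℝ) ≤ (m:ℝ) := by exact_mod_cast h2
      have hr2 : (m:ℝ) - 1 ≤ (ℓ:ℝ) := by exact_mod_cast h3
      have hl : (ℓ:ℝ) ≤ y * c := by linarith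
      have hr : y * c < (ℓ:ℝ) + 2 := by linarith
      refine ⟨h1, ?_, h4, ?_, ?_⟩
      · have : 2*(ℓ:ℝ) < (n:ℝ) := by linarith
        exact_mod_cast this
      · rw [div_le_iff₀ hc]; linarith
      · rw [lt_div_iff₀ hc]; linarith
    rcases eq_or_ne (m % 2) ((n:ℤ) % 2) with h | h
    · exact ⟨m, hkey m (by omega) le_rfl (by omega) h⟩
    · exact ⟨m - 1, hkey (m - 1) (by omega) (by omega) (by omega) (by omega)⟩
  -- covering
  have hcover : (Set.Ico (2/c) T ∪ Set.Ioc (-T) (-(2/c))) ⊆ ⋃ ℓ ∈ Aset n, L ℓ := by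
    rintro x (hx | hx)
    · obtain ⟨ℓ, h1, h2, h3, h4, h5⟩ := hfind x hx.1 hx.2
      have hmem : ℓ ∈ Aset n := (mem_Aset hn1).mpr ⟨by rw [abs_of_pos (by omega)]; omega, h3⟩
      refine Set.mem_iUnion₂.2 ⟨ℓ, hmem, ?_⟩
      have h0 : (0:ℤ) ≤ ℓ := by omega
      simp only [hL]
      simp only [if_pos h0]
      exact ⟨h4, h5⟩
    · obtain ⟨ℓ, h1, h2, h3, h4, h5⟩ := hfind (-x) (by linarith [hx.2]) (by linarith [hx.1])
      have hmem : -ℓ ∈ Aset n := (mem_Aset hn1).mpr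
        ⟨by rw [abs_neg, abs_of_pos (by omega)]; omega, by omega⟩
      refine Set.mem_iUnion₂.2 ⟨-ℓ, hmem, ?_⟩
      have h0 : ¬ (0:ℤ) ≤ -ℓ := by omega
      simp only [hL]
      simp only [if_neg h0]
      constructor
      · push_cast
        have e : (-(ℓ:ℝ) - 2)/c = -(((ℓ:ℝ) + 2)/c) := by ring
        rw [e]; linarith
      · push_cast
        have e : -(ℓ:ℝ)/c = -((ℓ:ℝ)/c) := by ring
        rw [e]; linarith
  -- integral chain
  have hintL : ∀ ℓ ∈ Aset n, IntegrableOn p1 (L ℓ) := fun ℓ _ => p1_integrable.integrableOn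
  have hbiu : (∫ x in ⋃ ℓ ∈ Aset n, L ℓ, p1 x) = ∑ ℓ ∈ Aset n, ∫ x in L ℓ, p1 x :=
    integral_biUnion_finset (Aset n) (fun ℓ _ => hmeasL ℓ) ldisj hintL
  have hWsub : (∫ x in (Set.Ico (2/c) T ∪ Set.Ioc (-T) (-(2/c))), p1 x) ≤
      ∑ ℓ ∈ Aset n, ∫ x in L ℓ, p1 x := by
    rw [← hbiu]
    exact setIntegral_mono_set p1_integrable.integrableOn
      (ae_of_all _ p1_nonneg)
      (HasSubset.Subset.eventuallyLE hcover)
  have hsum2 : (∑ ℓ ∈ Aset n, ∫ x in L ℓ, p1 x) ≤ 2/c * ∑ ℓ ∈ Aset n, p1 ((ℓ:ℝ)/c) := by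
    rw [Finset.mul_sum]
    exact Finset.sum_le_sum lkey
  -- indicator decomposition of the full integral
  have hTc2 : 2/c < T := by
    rw [hTdef, div_lt_div_iff₀ hc hc]
    nlinarith
  set W1 : Set ℝ := Set.Ico (2/c) T with hW1
  set W2 : Set ℝ := Set.Ioc (-T) (-(2/c)) with hW2
  set V : Set ℝ := Set.Ioo (-(2/c)) (2/c) with hV
  have hWV : (∫ t : ℝ, p1 t) ≤ (∫ x in W1 ∪ W2, p1 x) + ((∫ x in V, p1 x) +
      (∫ x in Set.Iic (-T), p1 x) + (∫ x in Set.Ici T, p1 x)) := by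
    have hiW : Integrable ((W1 ∪ W2).indicator p1) :=
      p1_integrable.indicator ((measurableSet_Ico.union measurableSet_Ioc))
    have hiV : Integrable (V.indicator p1) := p1_integrable.indicator measurableSet_Ioo
    have hi1 : Integrable ((Set.Iic (-T)).indicator p1) :=
      p1_integrable.indicator measurableSet_Iic
    have hi2 : Integrable ((Set.Ici T).indicator p1) :=
      p1_integrable.indicator measurableSet_Ici
    have hle : ∀ x, p1 x ≤ (W1 ∪ W2).indicator p1 x + (V.indicator p1 x +
        (Set.Iic (-T)).indicator p1 x + (Set.Ici T).indicator p1 x) := by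
      intro x
      have n0 : 0 ≤ (W1 ∪ W2).indicator p1 x :=
        Set.indicator_nonneg (fun y _ => p1_nonneg y) x
      have n1 : 0 ≤ V.indicator p1 x := Set.indicator_nonneg (fun y _ => p1_nonneg y) x
      have n2 : 0 ≤ (Set.Iic (-T)).indicator p1 x :=
        Set.indicator_nonneg (fun y _ => p1_nonneg y) x
      have n3 : 0 ≤ (Set.Ici T).indicator p1 x :=
        Set.indicator_nonneg (fun y _ => p1_nonneg y) x
      rcases le_or_gt x (-T) with h | h
      · rw [Set.indicator_of_mem (Set.mem_Iic.2 h)]; linarith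
      rcases le_or_gt x (-(2/c)) with h' | h'
      · rw [Set.indicator_of_mem (show x ∈ W1 ∪ W2 from Or.inr ⟨h, h'⟩)]; linarith
      rcases lt_or_ge x (2/c) with h'' | h''
      · rw [Set.indicator_of_mem (show x ∈ V from ⟨h', h''⟩)]; linarith
      rcases lt_or_ge x T with h3 | h3
      · rw [Set.indicator_of_mem (show x ∈ W1 ∪ W2 from Or.inl ⟨h'', h3⟩)]; linarith
      · rw [Set.indicator_of_mem (Set.mem_Ici.2 h3)]; linarith
    calc (∫ t : ℝ, p1 t) ≤ ∫ x, ((W1 ∪ W2).indicator p1 x + (V.indicator p1 x +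
        (Set.Iic (-T)).indicator p1 x + (Set.Ici T).indicator p1 x)) :=
          integral_mono p1_integrable (hiW.add ((hiV.add hi1).add hi2)) hle
      _ = _ := by
          have e1 : ∫ x, ((W1 ∪ W2).indicator p1 x + (V.indicator p1 x +
              (Set.Iic (-T)).indicator p1 x + (Set.Ici T).indicator p1 x)) =
              (∫ x, (W1 ∪ W2).indicator p1 x) + ∫ x, (V.indicator p1 x +
              (Set.Iic (-T)).indicator p1 x + (Set.Ici T).indicator p1 x) :=
            integral_add hiW ((hiV.add hi1).add hi2)
          have e2 : ∫ x, (V.indicator p1 x + (Set.Iic (-T)).indicator p1 x +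
              (Set.Ici T).indicator p1 x) =
              (∫ x, (V.indicator p1 x + (Set.Iic (-T)).indicator p1 x)) +
              ∫ x, (Set.Ici T).indicator p1 x :=
            integral_add (hiV.add hi1) hi2
          have e3 : ∫ x, (V.indicator p1 x + (Set.Iic (-T)).indicator p1 x) =
              (∫ x, V.indicator p1 x) + ∫ x, (Set.Iic (-T)).indicator p1 x :=
            integral_add hiV hi1
          rw [e1, e2, e3, integral_indicator (measurableSet_Ico.union measurableSet_Ioc),
            integral_indicator measurableSet_Ioo, integral_indicator measurableSet_Iic,
            integral_indicator measurableSet_Ici]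
  -- bound the V integral
  have hVle : (∫ x in V, p1 x) ≤ 4/c := by
    have hci : IntegrableOn (fun _ : ℝ => (1:ℝ)) V := by
      rw [hV]; exact integrableOn_const measure_Ioo_lt_top.ne
    have h1 : (∫ x in V, p1 x) ≤ ∫ _x in V, (1:ℝ) :=
      setIntegral_mono_on p1_integrable.integrableOn hci measurableSet_Ioo
        (fun x _ => p1_le_one x)
    rw [setIntegral_const, smul_eq_mul, mul_one, hV, Real.volume_real_Ioo] at h1
    have he : 2/c - (-(2/c)) = 4/c := by ring
    rw [he, max_eq_left (by positivity : (0:ℝ) ≤ 4/c)] at h1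
    exact h1
  have htail1 : (∫ x in Set.Iic (-T), p1 x) ≤ Real.exp 2 * Real.exp (-T) := p1_tail_Iic hT0
  have htail2 : (∫ x in Set.Ici T, p1 x) ≤ Real.exp 2 * Real.exp (-T) := p1_tail_Ici hT0
  -- put everything together
  have hfinal : (∫ t : ℝ, p1 t) ≤ 2/c * (∑ ℓ ∈ Aset n, p1 ((ℓ:ℝ)/c)) + 4/c +
      2 * (Real.exp 2 * Real.exp (-T)) := by
    have := hWsub.trans hsum2
    linarith
  have hmul := mul_le_mul_of_nonneg_left hfinal (by positivity : (0:ℝ) ≤ c/2)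
  have heq : c/2 * (2/c * (∑ ℓ ∈ Aset n, p1 ((ℓ:ℝ)/c)) + 4/c +
      2 * (Real.exp 2 * Real.exp (-T))) =
      (∑ ℓ ∈ Aset n, p1 ((ℓ:ℝ)/c)) + 2 + c * Real.exp 2 * Real.exp (-T) := by
    field_simp
    ring
  rw [heq] at hmul
  linarith

lemma tail_small (n : ℕ) (hn : 16 ≤ n) :
    (n : ℝ) ^ ((3 : ℝ) / 4) *
      Real.exp (-(((n : ℝ)/2 - 1) / (n : ℝ) ^ ((3 : ℝ) / 4))) ≤ 65536 := by
  have hn0 : (0:ℝ) < n := by positivity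
  have hn16 : (16:ℝ) ≤ n := by exact_mod_cast hn
  set c : ℝ := (n : ℝ) ^ ((3 : ℝ) / 4) with hcdef
  have hc : 0 < c := Real.rpow_pos_of_pos hn0 _
  set T : ℝ := ((n : ℝ)/2 - 1) / c with hTdef
  set x : ℝ := (n : ℝ) ^ ((1 : ℝ)/4) with hxdef
  have hx0 : 0 ≤ x := (Real.rpow_pos_of_pos hn0 _).le
  have hxn : x ^ 4 = (n:ℝ) := by
    rw [hxdef, ← Real.rpow_natCast ((n:ℝ) ^ ((1:ℝ)/4)) 4, ← Real.rpow_mul hn0.le]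
    norm_num
  have hxc : x * c = (n:ℝ) := by
    rw [hxdef, hcdef, ← Real.rpow_add hn0]
    norm_num
  have hcn : c ≤ (n:ℝ) := by
    calc c ≤ (n : ℝ) ^ (1:ℝ) :=
          Real.rpow_le_rpow_of_exponent_le (by linarith) (by norm_num)
      _ = (n:ℝ) := Real.rpow_one _
  have hT4 : x/4 ≤ T := by
    rw [hTdef, le_div_iff₀ hc]
    have e : x/4 * c = (n:ℝ)/4 := by
      rw [div_mul_eq_mul_div, hxc]
    rw [e]
    linarith
  have h1 : x/16 ≤ Real.exp (x/16) := by
    have := Real.add_one_le_exp (x/16)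
    linarith
  have h2 : (x/16)^4 ≤ Real.exp (x/16) ^ 4 := pow_le_pow_left₀ (by positivity) h1 4
  have h3 : Real.exp (x/16) ^ 4 = Real.exp (x/4) := by
    rw [← Real.exp_nat_mul]
    norm_num
    ring_nf
  have h4 : x^4 ≤ 65536 * Real.exp (x/4) := by
    rw [← h3]
    nlinarith [h2]
  calc c * Real.exp (-T) ≤ (n:ℝ) * Real.exp (-(x/4)) := by
        apply mul_le_mul hcn (Real.exp_le_exp.2 (by linarith)) (Real.exp_pos _).le hn0.le
    _ = x^4 * Real.exp (-(x/4)) := by rw [hxn]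
    _ ≤ 65536 := by
        rw [Real.exp_neg]
        have hp : (0:ℝ) < Real.exp (x/4) := Real.exp_pos _
        calc x^4 * (Real.exp (x/4))⁻¹ ≤ (65536 * Real.exp (x/4)) * (Real.exp (x/4))⁻¹ :=
              mul_le_mul_of_nonneg_right h4 (by positivity)
          _ = 65536 := by field_simp

theorem riemann_sum_p1 :
    ∃ C : ℝ, 0 < C ∧ ∃ N : ℕ, ∀ n : ℕ, N ≤ n →
      |(∑ ℓ ∈ (Finset.Ioo (-(n : ℤ)) (n : ℤ)).filter
            (fun ℓ : ℤ => 2 * |ℓ| < (n : ℤ) ∧ ℓ % 2 = (n : ℤ) % 2),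
          p1 ((ℓ : ℝ) / (n : ℝ) ^ ((3 : ℝ) / 4))) -
        ((n : ℝ) ^ ((3 : ℝ) / 4) / 2) * ∫ t : ℝ, p1 t| ≤ C * (n : ℝ) ^ ((1 : ℝ) / 12) := by
  refine ⟨524290, by norm_num, 16, fun n hn => ?_⟩
  have hn0 : (0:ℝ) < n := by positivity
  have hup := sum_upper n hn
  have hlo := sum_lower n hn
  have htail := tail_small n hn
  have hexp2 : Real.exp 2 ≤ 8 := by
    have h9 := Real.exp_one_lt_d9
    have he : Real.exp 2 = Real.exp 1 * Real.exp 1 := by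
      rw [← Real.exp_add]; norm_num
    nlinarith [Real.exp_pos 1]
  have hE : (n : ℝ) ^ ((3 : ℝ) / 4) * Real.exp 2 *
      Real.exp (-(((n : ℝ)/2 - 1) / (n : ℝ) ^ ((3 : ℝ) / 4))) ≤ 524288 := by
    have h0 : (0:ℝ) ≤ (n : ℝ) ^ ((3 : ℝ) / 4) *
        Real.exp (-(((n : ℝ)/2 - 1) / (n : ℝ) ^ ((3 : ℝ) / 4))) := by positivity
    calc (n : ℝ) ^ ((3 : ℝ) / 4) * Real.exp 2 *
        Real.exp (-(((n : ℝ)/2 - 1) / (n : ℝ) ^ ((3 : ℝ) / 4)))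
        = Real.exp 2 * ((n : ℝ) ^ ((3 : ℝ) / 4) *
          Real.exp (-(((n : ℝ)/2 - 1) / (n : ℝ) ^ ((3 : ℝ) / 4)))) := by ring
      _ ≤ 8 * 65536 := mul_le_mul hexp2 htail h0 (by norm_num)
      _ = 524288 := by norm_num
  have habs : |(∑ ℓ ∈ Aset n, p1 ((ℓ : ℝ) / (n : ℝ) ^ ((3 : ℝ) / 4))) -
      ((n : ℝ) ^ ((3 : ℝ) / 4) / 2) * ∫ t : ℝ, p1 t| ≤ 524290 := by
    rw [abs_le]
    constructor
    · linarith
    · linarith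
  have hone : (1:ℝ) ≤ (n : ℝ) ^ ((1 : ℝ) / 12) := by
    calc (1:ℝ) = (1:ℝ) ^ ((1:ℝ)/12) := (Real.one_rpow _).symm
      _ ≤ (n : ℝ) ^ ((1 : ℝ) / 12) := by
          apply Real.rpow_le_rpow (by norm_num) ?_ (by norm_num)
          have : (16:ℝ) ≤ n := by exact_mod_cast hn
          linarith
  calc |(∑ ℓ ∈ (Finset.Ioo (-(n : ℤ)) (n : ℤ)).filter
            (fun ℓ : ℤ => 2 * |ℓ| < (n : ℤ) ∧ ℓ % 2 = (n : ℤ) % 2),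
          p1 ((ℓ : ℝ) / (n : ℝ) ^ ((3 : ℝ) / 4))) -
        ((n : ℝ) ^ ((3 : ℝ) / 4) / 2) * ∫ t : ℝ, p1 t| ≤ 524290 := habs
    _ = 524290 * 1 := by norm_num
    _ ≤ 524290 * (n : ℝ) ^ ((1 : ℝ) / 12) := by
        apply mul_le_mul_of_nonneg_left hone (by norm_num)
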